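/- Let (X, G, Φ) be a dynamical system where X is a compact totally disconnected Hausdorff space, let S be a finite subset of G, and let {𝒰_λ}_{λ∈Λ} be a cofinal directed subset of Part(X). If Φ has the S-shadowing property, then the inverse limit system (lim⟵{ι, 𝒫𝒪_S(𝒰_λ)}, G, σ*) is conjugate to (lim⟵{ι, 𝒪(𝒰_λ)}, G, σ*); moreover both inverse systems (ι, 𝒫𝒪_S(𝒰_λ)) and (ι, 𝒪(𝒰_λ)) satisfy the Mittag-Leffler condition. -/
import Mathlib


open Set

universe u

/-! ### Dynamical systems: actions of a countable discrete group by homeomorphisms -/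

/-- An action of a group `G` on a topological space `X`: each `act g` is a homeomorphism
(continuity of the inverse follows from `act g⁻¹`). -/
structure DynAction (G X : Type u) [Group G] [TopologicalSpace X] where
  act : G → X → X
  continuous_act : ∀ g : G, Continuous (act g)
  act_one : ∀ x : X, act 1 x = x
  act_mul : ∀ (g g' : G) (x : X), act (g * g') x = act g (act g' x)

section Covers

variable {G X : Type u} [Group G] [TopologicalSpace X]

/-- A finite open cover of `X`. -/
def IsFOC (𝒰 : Finset (Set X)) : Prop :=
  (∀ U ∈ 𝒰, IsOpen U) ∧ ⋃₀ (𝒰 : Set (Set X)) = Set.univ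

/-- A finite partition of `X` into nonempty clopen sets. -/
def IsClopenPartition (𝒰 : Finset (Set X)) : Prop :=
  (∀ U ∈ 𝒰, IsClopen U ∧ U.Nonempty) ∧ ⋃₀ (𝒰 : Set (Set X)) = Set.univ ∧
    ∀ U ∈ 𝒰, ∀ V ∈ 𝒰, U ≠ V → U ∩ V = ∅

/-- `𝒱` refines `𝒰`: every member of `𝒱` is contained in a member of `𝒰`. -/
def Refines (𝒱 𝒰 : Finset (Set X)) : Prop :=
  ∀ V ∈ 𝒱, ∃ U ∈ 𝒰, V ⊆ U

/-- `{U g}` is a pattern of the `(S,𝒰)`-pseudo-orbit `{x g}`: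
all `U g` belong to `𝒰`, and `x (s*g) ∈ U (s*g)` and `Φ_s (x g) ∈ U (s*g)`
for all `g ∈ G`, `s ∈ S`. -/
def IsPseudoOrbitPattern (Φ : DynAction G X) (S : Set G) (𝒰 : Finset (Set X))
    (x : G → X) (U : G → Set X) : Prop :=
  (∀ g : G, U g ∈ 𝒰) ∧
    ∀ g : G, ∀ s ∈ S, x (s * g) ∈ U (s * g) ∧ Φ.act s (x g) ∈ U (s * g)

/-- `{x g}` is an `(S,𝒰)`-pseudo-orbit. -/
def IsPseudoOrbit (Φ : DynAction G X) (S : Set G) (𝒰 : Finset (Set X)) (x : G → X) : Prop :=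
  ∃ U : G → Set X, IsPseudoOrbitPattern Φ S 𝒰 x U

/-- `z` `𝒰`-shadows the family `{x g}`. -/
def Shadows (Φ : DynAction G X) (𝒰 : Finset (Set X)) (z : X) (x : G → X) : Prop :=
  ∀ g : G, ∃ U ∈ 𝒰, Φ.act g z ∈ U ∧ x g ∈ U

/-- The (topological) `S`-shadowing property. -/
def ShadowingProperty (Φ : DynAction G X) (S : Set G) : Prop :=
  ∀ 𝒰 : Finset (Set X), IsFOC 𝒰 → ∃ 𝒱 : Finset (Set X), IsFOC 𝒱 ∧
    ∀ x : G → X, IsPseudoOrbit Φ S 𝒱 x → ∃ z : X, Shadows Φ 𝒰 z x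

/-! ### Equivariant maps, factor maps, conjugacies -/

def IsEquivariant {Y : Type u} [TopologicalSpace Y]
    (ΦX : DynAction G X) (ΦY : DynAction G Y) (f : X → Y) : Prop :=
  ∀ (g : G) (x : X), f (ΦX.act g x) = ΦY.act g (f x)

/-- `f` is a factor map from `(X,G,ΦX)` onto `(Y,G,ΦY)`. -/
def IsFactorMap {Y : Type u} [TopologicalSpace Y]
    (ΦX : DynAction G X) (ΦY : DynAction G Y) (f : X → Y) : Prop :=
  Continuous f ∧ Function.Surjective f ∧ IsEquivariant ΦX ΦY f

/-- `f` is a conjugacy (bijective factor map). -/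
def IsConjugacy {Y : Type u} [TopologicalSpace Y]
    (ΦX : DynAction G X) (ΦY : DynAction G Y) (f : X → Y) : Prop :=
  Continuous f ∧ Function.Bijective f ∧ IsEquivariant ΦX ΦY f

end Covers

/-! ### Shifts, subshifts, shifts of finite type -/

/-- The shift action on `A^G`: `(σ_g x) h = x (h * g)`. -/
def shift (G A : Type u) [Group G] (g : G) (x : G → A) : G → A :=
  fun h => x (h * g)

/-- The full shift `A^G` (product topology) as a dynamical system. -/
def shiftDyn (G A : Type u) [Group G] [TopologicalSpace A] : DynAction G (G → A) where
  act := shift G A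
  continuous_act g := continuous_pi fun h => continuous_apply (h * g)
  act_one x := by funext h; simp [shift]
  act_mul g g' x := by funext h; simp [shift, mul_assoc]

/-- A subshift: a closed shift-invariant subset of the full shift `A^G`. -/
def IsSubshift {G A : Type u} [Group G] [TopologicalSpace A] (Y : Set (G → A)) : Prop :=
  IsClosed Y ∧ ∀ g : G, ∀ x ∈ Y, shift G A g x ∈ Y

/-- The cylinder set determined by the values of `P` on the finite shape `B`. -/
def cylinder {G A : Type u} (B : Finset G) (P : G → A) : Set (G → A) :=
  {y | ∀ b ∈ B, y b = P b}

/-- The language of `Y ⊆ A^G` over the finite shape `B` (a pattern is recorded by any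
function `G → A` with the prescribed values on `B`). -/
def language {G A : Type u} (B : Finset G) (Y : Set (G → A)) : Set (G → A) :=
  {P | (cylinder B P ∩ Y).Nonempty}

/-- `Y` is a shift of finite type over the finite shape `B`: it is cut out by a family of
forbidden patterns on `B`. -/
def IsSFTOver {G A : Type u} [Group G] (B : Finset G) (Y : Set (G → A)) : Prop :=
  ∃ ℱ : Set (G → A), Y = {x | ∀ g : G, ∀ P ∈ ℱ, shift G A g x ∉ cylinder B P}

/-- The shift action restricted to a subshift. -/
def subshiftDyn {G A : Type u} [Group G] [TopologicalSpace A] (Y : Set (G → A))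
    (hY : IsSubshift Y) : DynAction G ↥Y where
  act g x := ⟨shift G A g x.1, hY.2 g x.1 x.2⟩
  continuous_act g := Continuous.subtype_mk
    ((continuous_pi fun h => continuous_apply (h * g)).comp continuous_subtype_val) _
  act_one x := by apply Subtype.ext; funext h; simp [shift]
  act_mul g g' x := by apply Subtype.ext; funext h; simp [shift, mul_assoc]

/-! ### Hitting time sets and mixing-type properties -/

section Mixing

variable {G X : Type u} [Group G] [TopologicalSpace X]

/-- The hitting time set `N(U,V) = {g ≠ e : U ∩ Φ_{g⁻¹}(V) ≠ ∅}`. -/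
def hittingTimes (Φ : DynAction G X) (U V : Set X) : Set G :=
  {g : G | g ≠ 1 ∧ (U ∩ Φ.act g⁻¹ '' V).Nonempty}

/-- Topological mixing: `G \ N(U,V)` is finite for all nonempty open `U, V`. -/
def IsMixing (Φ : DynAction G X) : Prop :=
  ∀ U V : Set X, IsOpen U → IsOpen V → U.Nonempty → V.Nonempty →
    ((hittingTimes Φ U V)ᶜ : Set G).Finite

/-- Minimality: there is no nonempty proper closed invariant subset. -/
def IsMinimal (Φ : DynAction G X) : Prop :=
  ∀ K : Set X, IsClosed K → (∀ g : G, ∀ x ∈ K, Φ.act g x ∈ K) →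
    K = ∅ ∨ K = Set.univ

end Mixing

/-! ### Orbit spaces and pseudo-orbit spaces of finite covers -/

/-- An element of the finite cover `𝒰`, regarded as a letter of a (discrete) finite
alphabet. -/
structure CoverElt {X : Type u} (𝒰 : Finset (Set X)) where
  val : Set X
  mem : val ∈ 𝒰

instance {X : Type u} (𝒰 : Finset (Set X)) : TopologicalSpace (CoverElt 𝒰) := ⊥
instance {X : Type u} (𝒰 : Finset (Set X)) : DiscreteTopology (CoverElt 𝒰) := ⟨rfl⟩
instance {X : Type u} (𝒰 : Finset (Set X)) : Finite (CoverElt 𝒰) :=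
  Finite.of_injective (fun e => (⟨e.val, e.mem⟩ : {U : Set X // U ∈ 𝒰}))
    (fun a b hab => by cases a; cases b; simpa using hab)

/-- The `𝒰`-orbit space `𝒪(𝒰)`: the closure in the full shift `𝒰^G` of the set of
orbit patterns. -/
def orbitSpace {G X : Type u} [Group G] [TopologicalSpace X]
    (Φ : DynAction G X) (𝒰 : Finset (Set X)) : Set (G → CoverElt 𝒰) :=
  closure {u : G → CoverElt 𝒰 | (⋂ g : G, Φ.act g⁻¹ '' (u g).val).Nonempty}

/-- The `(S,𝒰)`-pseudo-orbit space `𝒫𝒪_S(𝒰)`: all patterns of `(S,𝒰)`-pseudo-orbits. -/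
def psOrbitSpace {G X : Type u} [Group G] [TopologicalSpace X]
    (Φ : DynAction G X) (S : Set G) (𝒰 : Finset (Set X)) : Set (G → CoverElt 𝒰) :=
  {u : G → CoverElt 𝒰 | ∃ x : G → X, IsPseudoOrbitPattern Φ S 𝒰 x (fun g => (u g).val)}
set_option linter.unusedSectionVars false
section Aux

variable {G X : Type u} [Group G] [TopologicalSpace X]

/-- The set of genuine orbit patterns over the cover `𝒰`. -/
def genuinePatterns (Φ : DynAction G X) (𝒰 : Finset (Set X)) : Set (G → CoverElt 𝒰) :=
  {u : G → CoverElt 𝒰 | (⋂ g : G, Φ.act g⁻¹ '' (u g).val).Nonempty}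

lemma coverElt_ext {𝒰 : Finset (Set X)} {a b : CoverElt 𝒰} (h : a.val = b.val) : a = b := by
  cases a; cases b; simpa using h

lemma dynAct_inv_apply (Φ : DynAction G X) (g : G) (z : X) :
    Φ.act g⁻¹ (Φ.act g z) = z := by
  rw [← Φ.act_mul, inv_mul_cancel, Φ.act_one]

lemma dynAct_apply_inv (Φ : DynAction G X) (g : G) (z : X) :
    Φ.act g (Φ.act g⁻¹ z) = z := by
  rw [← Φ.act_mul, mul_inv_cancel, Φ.act_one]

lemma mem_act_inv_image (Φ : DynAction G X) (g : G) {A : Set X} {z : X} :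
    z ∈ Φ.act g⁻¹ '' A ↔ Φ.act g z ∈ A := by
  constructor
  · rintro ⟨y, hy, rfl⟩
    rwa [dynAct_apply_inv]
  · intro h
    exact ⟨Φ.act g z, h, dynAct_inv_apply Φ g z⟩

lemma part_unique {𝒰 : Finset (Set X)} (hp : IsClopenPartition 𝒰)
    {U V : Set X} (hU : U ∈ 𝒰) (hV : V ∈ 𝒰) {x : X} (hxU : x ∈ U) (hxV : x ∈ V) : U = V := by
  by_contra h
  have h2 := hp.2.2 U hU V hV h
  exact absurd h2 (Set.Nonempty.ne_empty ⟨x, hxU, hxV⟩)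

lemma part_exists {𝒰 : Finset (Set X)} (hp : IsClopenPartition 𝒰) (x : X) :
    ∃ U ∈ 𝒰, x ∈ U := by
  have : x ∈ ⋃₀ (𝒰 : Set (Set X)) := by rw [hp.2.1]; trivial
  simpa using this

lemma genuine_subset_psOrbit (Φ : DynAction G X) (S : Set G) (𝒰 : Finset (Set X)) :
    genuinePatterns Φ 𝒰 ⊆ psOrbitSpace Φ S 𝒰 := by
  rintro u ⟨z, hz⟩
  simp only [Set.mem_iInter] at hz
  have h1 : ∀ h : G, Φ.act h z ∈ (u h).val := fun h => (mem_act_inv_image Φ h).1 (hz h)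
  refine ⟨fun g => Φ.act g z, fun g => (u g).mem, fun g s _ => ?_⟩
  exact ⟨h1 (s * g), by rw [← Φ.act_mul]; exact h1 (s * g)⟩

lemma psOrbit_isClosed [CompactSpace X] (Φ : DynAction G X) (S : Set G)
    {𝒰 : Finset (Set X)} (hp : IsClopenPartition 𝒰) :
    IsClosed (psOrbitSpace Φ S 𝒰) := by
  apply isClosed_of_closure_subset
  intro u hu
  classical
  set K : Finset (G × G) → Set (G → X) := fun T =>
    {x : G → X | ∀ p ∈ T, p.2 ∈ S →
      x (p.2 * p.1) ∈ (u (p.2 * p.1)).val ∧ Φ.act p.2 (x p.1) ∈ (u (p.2 * p.1)).val} with hK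
  have hval : ∀ h : G, IsClosed (u h).val := fun h => (hp.1 _ (u h).mem).1.1
  have hKcl : ∀ T, IsClosed (K T) := by
    intro T
    have : K T = ⋂ p ∈ T, {x : G → X | p.2 ∈ S →
        x (p.2 * p.1) ∈ (u (p.2 * p.1)).val ∧ Φ.act p.2 (x p.1) ∈ (u (p.2 * p.1)).val} := by
      ext x; simp [hK]
    rw [this]
    refine isClosed_biInter fun p _ => ?_
    by_cases hs : p.2 ∈ S
    · have : {x : G → X | p.2 ∈ S →
          x (p.2 * p.1) ∈ (u (p.2 * p.1)).val ∧ Φ.act p.2 (x p.1) ∈ (u (p.2 * p.1)).val}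
        = ((fun x : G → X => x (p.2 * p.1)) ⁻¹' (u (p.2 * p.1)).val) ∩
          ((fun x : G → X => Φ.act p.2 (x p.1)) ⁻¹' (u (p.2 * p.1)).val) := by
        ext x; simp only [Set.mem_setOf_eq, Set.mem_inter_iff, Set.mem_preimage]; tauto
      rw [this]
      exact ((hval _).preimage (continuous_apply _)).inter
        ((hval _).preimage ((Φ.continuous_act _).comp (continuous_apply _)))
    · have : {x : G → X | p.2 ∈ S →
          x (p.2 * p.1) ∈ (u (p.2 * p.1)).val ∧ Φ.act p.2 (x p.1) ∈ (u (p.2 * p.1)).val}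
        = Set.univ := by
        ext x; simp [hs]
      rw [this]; exact isClosed_univ
  have hKne : ∀ T, (K T).Nonempty := by
    intro T
    -- use the cylinder neighborhood on the finite set of relevant coordinates
    set F : Finset G := T.image (fun p => p.2 * p.1) with hF
    have hOopen : IsOpen {v : G → CoverElt 𝒰 | ∀ b ∈ F, v b = u b} := by
      have : {v : G → CoverElt 𝒰 | ∀ b ∈ F, v b = u b}
          = ⋂ b ∈ F, (fun v : G → CoverElt 𝒰 => v b) ⁻¹' {u b} := by
        ext v; simp
      rw [this]
      exact isOpen_biInter_finset fun b _ =>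
        (isOpen_discrete _).preimage (continuous_apply b)
    have hmem : u ∈ {v : G → CoverElt 𝒰 | ∀ b ∈ F, v b = u b} := fun b _ => rfl
    obtain ⟨u', hu'O, x', hx'⟩ := mem_closure_iff.1 hu _ hOopen hmem
    refine ⟨x', ?_⟩
    intro p hpT hs
    have hcoord : u' (p.2 * p.1) = u (p.2 * p.1) :=
      hu'O _ (Finset.mem_image.2 ⟨p, hpT, rfl⟩)
    have h2 := hx'.2 p.1 p.2 hs
    simp only [hcoord] at h2
    exact h2
  have hdir : Directed (· ⊇ ·) K := by
    intro T T'
    refine ⟨T ∪ T', fun x hx p hp hs => hx p (Finset.mem_union_left _ hp) hs,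
      fun x hx p hp hs => hx p (Finset.mem_union_right _ hp) hs⟩
  obtain ⟨x, hx⟩ := IsCompact.nonempty_iInter_of_directed_nonempty_isCompact_isClosed
    K hdir hKne (fun T => (hKcl T).isCompact) hKcl
  simp only [Set.mem_iInter] at hx
  refine ⟨x, fun g => (u g).mem, fun g s hs => ?_⟩
  exact hx {(g, s)} (g, s) (Finset.mem_singleton_self _) hs

lemma orbit_subset_psOrbit [CompactSpace X] (Φ : DynAction G X) (S : Set G)
    {𝒰 : Finset (Set X)} (hp : IsClopenPartition 𝒰) :
    orbitSpace Φ 𝒰 ⊆ psOrbitSpace Φ S 𝒰 :=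
  closure_minimal (genuine_subset_psOrbit Φ S 𝒰) (psOrbit_isClosed Φ S hp)

end Aux
section Aux2

variable {G X : Type u} [Group G] [TopologicalSpace X]

lemma exists_clopen_partition_refines [CompactSpace X] [T2Space X]
    [TotallyDisconnectedSpace X] {𝒱 : Finset (Set X)} (h : IsFOC 𝒱) :
    ∃ 𝒲 : Finset (Set X), IsClopenPartition 𝒲 ∧ Refines 𝒲 𝒱 := by
  classical
  -- for each point pick a clopen neighborhood inside a member of 𝒱
  have hpt : ∀ x : X, ∃ C : Set X, IsClopen C ∧ x ∈ C ∧ ∃ V ∈ 𝒱, C ⊆ V := by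
    intro x
    have hx : x ∈ ⋃₀ (𝒱 : Set (Set X)) := by rw [h.2]; trivial
    obtain ⟨V, hV, hxV⟩ := hx
    obtain ⟨C, hC, hxC, hCV⟩ := compact_exists_isClopen_in_isOpen (h.1 V hV) hxV
    exact ⟨C, hC, hxC, V, hV, hCV⟩
  choose C hCclopen hxC hCsub using hpt
  have hcover : (Set.univ : Set X) ⊆ ⋃ x : X, C x := fun x _ =>
    Set.mem_iUnion.2 ⟨x, hxC x⟩
  obtain ⟨t, ht⟩ := CompactSpace.isCompact_univ.elim_finite_subcover C
    (fun x => (hCclopen x).2) hcover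
  -- atoms of the boolean algebra generated by {C x | x ∈ t}
  set A : (↥t → Bool) → Set X := fun f =>
    ⋂ i : ↥t, (if f i then C i.1 else (C i.1)ᶜ) with hA
  have hAclopen : ∀ f, IsClopen (A f) := by
    intro f
    constructor
    · refine isClosed_iInter fun i => ?_
      by_cases hb : f i
      · simpa [hb] using (hCclopen i.1).1
      · simpa [hb] using (hCclopen i.1).2.isClosed_compl
    · refine isOpen_iInter_of_finite fun i => ?_
      by_cases hb : f i
      · simpa [hb] using (hCclopen i.1).2
      · simpa [hb] using (hCclopen i.1).1.isOpen_compl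
  have hAmem : ∀ x : X, x ∈ A (fun i => decide (x ∈ C i.1)) := by
    intro x
    refine Set.mem_iInter.2 fun i => ?_
    by_cases hb : x ∈ C i.1 <;> simp [hb]
  refine ⟨Finset.image A (Finset.univ.filter (fun f => (A f).Nonempty)), ⟨?_, ?_, ?_⟩, ?_⟩
  · rintro U hU
    obtain ⟨f, hf, rfl⟩ := Finset.mem_image.1 hU
    exact ⟨hAclopen f, (Finset.mem_filter.1 hf).2⟩
  · apply Set.eq_univ_of_forall
    intro x
    refine Set.mem_sUnion.2 ⟨A (fun i => decide (x ∈ C i.1)), ?_, hAmem x⟩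
    simp only [Finset.coe_image, Set.mem_image, Finset.mem_coe, Finset.mem_filter]
    exact ⟨_, ⟨Finset.mem_univ _, ⟨x, hAmem x⟩⟩, rfl⟩
  · rintro U hU V hV hUV
    obtain ⟨f, _, rfl⟩ := Finset.mem_image.1 hU
    obtain ⟨f', _, rfl⟩ := Finset.mem_image.1 hV
    have hff' : f ≠ f' := fun hh => hUV (by rw [hh])
    obtain ⟨i, hi⟩ := Function.ne_iff.1 hff'
    apply Set.eq_empty_of_forall_notMem
    rintro x ⟨hx1, hx2⟩
    have h1 := Set.mem_iInter.1 hx1 i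
    have h2 := Set.mem_iInter.1 hx2 i
    rcases Bool.eq_false_or_eq_true (f i) with hb | hb <;>
      rcases Bool.eq_false_or_eq_true (f' i) with hb' | hb' <;>
      simp [hb, hb'] at h1 h2 hi <;> tauto
  · rintro U hU
    obtain ⟨f, hf, rfl⟩ := Finset.mem_image.1 hU
    obtain ⟨x, hx⟩ := (Finset.mem_filter.1 hf).2
    have hxcov : x ∈ ⋃ i ∈ t, C i := ht (Set.mem_univ x)
    obtain ⟨i, hit, hxCi⟩ := Set.mem_iUnion₂.1 hxcov
    have hfi : f ⟨i, hit⟩ = true := by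
      by_contra hb
      have := Set.mem_iInter.1 hx ⟨i, hit⟩
      simp [Bool.eq_false_iff.2 hb] at this
      exact this hxCi
    obtain ⟨V, hV, hCV⟩ := hCsub i
    refine ⟨V, hV, ?_⟩
    intro y hy
    have := Set.mem_iInter.1 hy ⟨i, hit⟩
    rw [hfi] at this
    simp at this
    exact hCV this

end Aux2
section Aux3

variable {G X : Type u} [Group G] [TopologicalSpace X]

lemma refines_trans {A B C : Finset (Set X)} (h1 : Refines A B) (h2 : Refines B C) :
    Refines A C := by
  intro V hV
  obtain ⟨W, hW, hVW⟩ := h1 V hV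
  obtain ⟨U, hU, hWU⟩ := h2 W hW
  exact ⟨U, hU, hVW.trans hWU⟩

lemma genuine_lift (Φ : DynAction G X) {𝒰l 𝒰n : Finset (Set X)}
    (hpl : IsClopenPartition 𝒰l) (hpn : IsClopenPartition 𝒰n)
    (ιf : CoverElt 𝒰n → CoverElt 𝒰l) (hιf : ∀ V, V.val ⊆ (ιf V).val) :
    genuinePatterns Φ 𝒰l ⊆ (fun (u : G → CoverElt 𝒰n) => fun g => ιf (u g)) ''
      genuinePatterns Φ 𝒰n := by
  rintro w ⟨z, hz⟩
  simp only [Set.mem_iInter] at hz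
  have hw : ∀ g : G, Φ.act g z ∈ (w g).val := fun g => (mem_act_inv_image Φ g).1 (hz g)
  choose W hWmem hWx using fun g => part_exists hpn (Φ.act g z)
  refine ⟨fun g => ⟨W g, hWmem g⟩, ⟨z, Set.mem_iInter.2 fun g =>
    (mem_act_inv_image Φ g).2 (hWx g)⟩, funext fun g => ?_⟩
  exact coverElt_ext (part_unique hpl (ιf ⟨W g, hWmem g⟩).mem (w g).mem
    (hιf _ (hWx g)) (hw g))

lemma shadow_step (Φ : DynAction G X) (S : Set G) {𝒰l 𝒰n 𝒱 : Finset (Set X)}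
    (hpl : IsClopenPartition 𝒰l) (hpn : IsClopenPartition 𝒰n)
    (href : Refines 𝒰n 𝒱)
    (hshad : ∀ x : G → X, IsPseudoOrbit Φ S 𝒱 x → ∃ z : X, Shadows Φ 𝒰l z x)
    (ιf : CoverElt 𝒰n → CoverElt 𝒰l) (hιf : ∀ V, V.val ⊆ (ιf V).val) :
    ∀ u ∈ psOrbitSpace Φ S 𝒰n, (fun g => ιf (u g)) ∈ genuinePatterns Φ 𝒰l := by
  rintro u ⟨x₀, hpat⟩
  choose V hVmem hVsub using fun g => href (u g).val (u g).mem
  obtain ⟨x, hxu, hxpo⟩ : ∃ x : G → X, (∀ g, x g ∈ (u g).val) ∧ IsPseudoOrbit Φ S 𝒱 x := by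
    rcases Set.eq_empty_or_nonempty S with hS | ⟨s₀, hs₀⟩
    · choose x hx using fun g => ((hpn.1 _ (u g).mem).2 : (u g).val.Nonempty)
      exact ⟨x, hx, ⟨V, hVmem, fun g s hs => by simp [hS] at hs⟩⟩
    · have hxu : ∀ g, x₀ g ∈ (u g).val := by
        intro g
        have h1 := (hpat.2 (s₀⁻¹ * g) s₀ hs₀).1
        rw [mul_inv_cancel_left] at h1
        exact h1
      exact ⟨x₀, hxu, ⟨V, hVmem, fun g s hs =>
        ⟨hVsub _ (hxu _), hVsub _ ((hpat.2 g s hs).2)⟩⟩⟩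
  obtain ⟨z, hz⟩ := hshad x hxpo
  refine ⟨z, Set.mem_iInter.2 fun g => (mem_act_inv_image Φ g).2 ?_⟩
  obtain ⟨W, hWm, hzW, hxW⟩ := hz g
  have hWeq : W = (ιf (u g)).val :=
    part_unique hpl hWm (ιf (u g)).mem hxW (hιf _ (hxu g))
  rw [← hWeq]
  exact hzW

end Aux3

/-- **Theorem 4.4.** With the `S`-shadowing property, the inverse limit of the
pseudo-orbit spaces is conjugate to the inverse limit of the orbit spaces, and both
inverse systems satisfy the ML condition. -/
theorem invlim_psOrbit_conjugate_invlim_orbit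
    {G X : Type} [Group G] [Countable G] [TopologicalSpace X]
    [CompactSpace X] [T2Space X] [TotallyDisconnectedSpace X]
    (Φ : DynAction G X) (S : Finset G)
    {Λ : Type} [Preorder Λ] [IsDirected Λ (· ≤ ·)]
    (𝒰 : Λ → Finset (Set X)) (hpart : ∀ l : Λ, IsClopenPartition (𝒰 l))
    (hmono : ∀ l m : Λ, l ≤ m → Refines (𝒰 m) (𝒰 l))
    (hcof : ∀ 𝒱 : Finset (Set X), IsClopenPartition 𝒱 → ∃ l : Λ, Refines (𝒰 l) 𝒱)
    (ι : ∀ {l m : Λ}, l ≤ m → CoverElt (𝒰 m) → CoverElt (𝒰 l))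
    (hι : ∀ {l m : Λ} (h : l ≤ m) (V : CoverElt (𝒰 m)), V.val ⊆ (ι h V).val)
    (hsh : ShadowingProperty Φ (S : Set G)) :
    (∃ F : {u : ∀ l : Λ, G → CoverElt (𝒰 l) //
              (∀ l : Λ, u l ∈ psOrbitSpace Φ (S : Set G) (𝒰 l)) ∧
              ∀ (l m : Λ) (h : l ≤ m), (fun g => ι h (u m g)) = u l} →
           {u : ∀ l : Λ, G → CoverElt (𝒰 l) //
              (∀ l : Λ, u l ∈ orbitSpace Φ (𝒰 l)) ∧
              ∀ (l m : Λ) (h : l ≤ m), (fun g => ι h (u m g)) = u l},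
        Continuous F ∧ Function.Bijective F ∧
        ∀ (g : G) (u v), (v.1 = fun l => shift G (CoverElt (𝒰 l)) g (u.1 l)) →
          ((F v).1 = fun l => shift G (CoverElt (𝒰 l)) g ((F u).1 l))) ∧
    (∀ l : Λ, ∃ m : Λ, ∃ h : l ≤ m, ∀ (n : Λ) (h' : m ≤ n),
      (fun (u : G → CoverElt (𝒰 n)) => fun g => ι (h.trans h') (u g)) ''
          psOrbitSpace Φ (S : Set G) (𝒰 n)
        = (fun (u : G → CoverElt (𝒰 m)) => fun g => ι h (u g)) ''
            psOrbitSpace Φ (S : Set G) (𝒰 m)) ∧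
    (∀ l : Λ, ∃ m : Λ, ∃ h : l ≤ m, ∀ (n : Λ) (h' : m ≤ n),
      (fun (u : G → CoverElt (𝒰 n)) => fun g => ι (h.trans h') (u g)) ''
          orbitSpace Φ (𝒰 n)
        = (fun (u : G → CoverElt (𝒰 m)) => fun g => ι h (u g)) '' orbitSpace Φ (𝒰 m)) := by
  classical
  have foc : ∀ l : Λ, IsFOC (𝒰 l) :=
    fun l => ⟨fun U hU => ((hpart l).1 U hU).1.2, (hpart l).2.1⟩
  -- the key shadowing step at each level
  have key : ∀ l : Λ, ∃ m : Λ, ∃ h : l ≤ m, ∀ (n : Λ) (hln : l ≤ n), m ≤ n →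
      ∀ u ∈ psOrbitSpace Φ (S : Set G) (𝒰 n),
        (fun g => ι hln (u g)) ∈ genuinePatterns Φ (𝒰 l) := by
    intro l
    obtain ⟨𝒱, h𝒱, hshad⟩ := hsh (𝒰 l) (foc l)
    obtain ⟨𝒲, h𝒲, h𝒲𝒱⟩ := exists_clopen_partition_refines h𝒱
    obtain ⟨l₁, hl₁⟩ := hcof 𝒲 h𝒲
    obtain ⟨m, hlm, hl₁m⟩ := directed_of (· ≤ ·) l l₁
    refine ⟨m, hlm, fun n hln hmn u hu => ?_⟩
    have href : Refines (𝒰 n) 𝒱 :=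
      refines_trans (refines_trans (hmono l₁ n (hl₁m.trans hmn)) hl₁) h𝒲𝒱
    exact shadow_step Φ (S : Set G) (hpart l) (hpart n) href hshad (ι hln) (hι hln) u hu
  have lift : ∀ (l n : Λ) (h : l ≤ n), genuinePatterns Φ (𝒰 l) ⊆
      (fun (u : G → CoverElt (𝒰 n)) => fun g => ι h (u g)) '' genuinePatterns Φ (𝒰 n) :=
    fun l n h => genuine_lift Φ (hpart l) (hpart n) (ι h) (hι h)
  have gen_sub_orb : ∀ l : Λ, genuinePatterns Φ (𝒰 l) ⊆ orbitSpace Φ (𝒰 l) :=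
    fun l => subset_closure
  have orb_sub_ps : ∀ l : Λ, orbitSpace Φ (𝒰 l) ⊆ psOrbitSpace Φ (S : Set G) (𝒰 l) :=
    fun l => orbit_subset_psOrbit Φ (S : Set G) (hpart l)
  have threq : ∀ u : ∀ l : Λ, G → CoverElt (𝒰 l),
      (∀ (l m : Λ) (h : l ≤ m), (fun g => ι h (u m g)) = u l) →
      ((∀ l, u l ∈ psOrbitSpace Φ (S : Set G) (𝒰 l)) ↔ (∀ l, u l ∈ orbitSpace Φ (𝒰 l))) := by
    intro u hc
    constructor
    · intro hp l
      obtain ⟨m, h, hkey⟩ := key l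
      have h1 := hkey m h le_rfl (u m) (hp m)
      rw [hc l m h] at h1
      exact gen_sub_orb l h1
    · intro ho l
      exact orb_sub_ps l (ho l)
  refine ⟨⟨fun u => ⟨u.1, (threq u.1 u.2.2).1 u.2.1, u.2.2⟩, ?_, ⟨?_, ?_⟩, ?_⟩, ?_, ?_⟩
  · exact Continuous.subtype_mk continuous_subtype_val _
  · intro a b hab
    apply Subtype.ext
    simpa [Subtype.ext_iff] using hab
  · intro v
    exact ⟨⟨v.1, (threq v.1 v.2.2).2 v.2.1, v.2.2⟩, Subtype.ext rfl⟩
  · intro g u v hv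
    exact hv
  · -- ML for pseudo-orbit spaces
    intro l
    obtain ⟨m, h, hkey⟩ := key l
    refine ⟨m, h, fun n h' => Set.Subset.antisymm ?_ ?_⟩
    · rintro w ⟨u, hu, rfl⟩
      have hw := hkey n (h.trans h') h' u hu
      obtain ⟨v, hv, hveq⟩ := lift l m h hw
      exact ⟨v, genuine_subset_psOrbit Φ (S : Set G) (𝒰 m) hv, hveq⟩
    · rintro w ⟨u, hu, rfl⟩
      have hw := hkey m h le_rfl u hu
      obtain ⟨v, hv, hveq⟩ := lift l n (h.trans h') hw
      exact ⟨v, genuine_subset_psOrbit Φ (S : Set G) (𝒰 n) hv, hveq⟩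
  · -- ML for orbit spaces
    intro l
    obtain ⟨m, h, hkey⟩ := key l
    refine ⟨m, h, fun n h' => Set.Subset.antisymm ?_ ?_⟩
    · rintro w ⟨u, hu, rfl⟩
      have hw := hkey n (h.trans h') h' u (orb_sub_ps n hu)
      obtain ⟨v, hv, hveq⟩ := lift l m h hw
      exact ⟨v, gen_sub_orb m hv, hveq⟩
    · rintro w ⟨u, hu, rfl⟩
      have hw := hkey m h le_rfl u (orb_sub_ps m hu)
      obtain ⟨v, hv, hveq⟩ := lift l n (h.trans h') hw
      exact ⟨v, gen_sub_orb n hv, hveq⟩
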